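/- Assume GCH. If κ is regular, ρ is regular, and there exists a ρ-almost disjoint family A ⊆ [κ]^κ with |A| = κ having no ρ⁺-transversal, then for every cardinal λ with ρ⁺ < λ < κ there exists a ρ-almost disjoint family B ⊆ [κ]^λ with |B| = κ having no ρ⁺-transversal. -/
import Mathlib


open Set Cardinal

open scoped Classical

universe u

/-- One step of the transfinite recursion: at stage `i`, remove everything chosen at
earlier stages, apply the Erdős–Hajnal transversal (via `Classical.choice` on the
existential, guarded by a `dite`), and keep only the union of the traces. -/
private noncomputable def EHrec {α : Type u} (𝒜 : Set (Set α)) (ρ : Cardinal.{u})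
    {ι : Type u} (r : ι → ι → Prop) (wf : WellFounded r) : ι → Set α :=
  wf.fix fun i prev =>
    if h : ∃ T : Set α, ∀ A ∈ 𝒜,
        0 < #↥((A \ ⋃ j, ⋃ hj : r j i, prev j hj) ∩ T) ∧
          #↥((A \ ⋃ j, ⋃ hj : r j i, prev j hj) ∩ T) < Order.succ (Order.succ ρ)
    then ⋃ A ∈ 𝒜, (A \ ⋃ j, ⋃ hj : r j i, prev j hj) ∩ h.choose
    else ∅

/-- Everything chosen before stage `i`. -/
private noncomputable def EHP {α : Type u} (𝒜 : Set (Set α)) (ρ : Cardinal.{u})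
    {ι : Type u} (r : ι → ι → Prop) (wf : WellFounded r) (i : ι) : Set α :=
  ⋃ j, ⋃ _ : r j i, EHrec 𝒜 ρ r wf j

private theorem EHrec_def {α : Type u} (𝒜 : Set (Set α)) (ρ : Cardinal.{u})
    {ι : Type u} (r : ι → ι → Prop) (wf : WellFounded r) (i : ι) :
    EHrec 𝒜 ρ r wf i =
      if h : ∃ T : Set α, ∀ A ∈ 𝒜,
          0 < #↥((A \ EHP 𝒜 ρ r wf i) ∩ T) ∧
            #↥((A \ EHP 𝒜 ρ r wf i) ∩ T) < Order.succ (Order.succ ρ)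
      then ⋃ A ∈ 𝒜, (A \ EHP 𝒜 ρ r wf i) ∩ h.choose
      else ∅ :=
  wf.fix_eq _ i

/-- The key invariants of the recursion, proved by well-founded induction:
at every stage `i`, every `A ∈ 𝒜` meets the stage-`i` set in a nonempty set of
cardinality at most `ρ⁺`, and the stage-`i` set is disjoint from all earlier stages. -/
private theorem EHrec_spec {α : Type u} {κ ρ lam : Cardinal.{u}}
    (hκ : ℵ₀ ≤ κ) (hρ0 : ℵ₀ ≤ ρ) (hρκ : ρ < κ)
    (hsl : Order.succ ρ ≤ lam) (hlκ : lam < κ)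
    {ι : Type u} (r : ι → ι → Prop) (wf : WellFounded r)
    (tri : ∀ i j : ι, i ≠ j → r i j ∨ r j i) (hι : #ι = lam)
    (𝒜 : Set (Set α)) (hcard : #↥𝒜 = κ) (hsize : ∀ A ∈ 𝒜, #↥A = κ)
    (had : ∀ A ∈ 𝒜, ∀ B ∈ 𝒜, A ≠ B → #↥(A ∩ B) < ρ)
    (hEH : ∀ ℱ : Set (Set α), #↥ℱ = κ → (∀ A ∈ ℱ, #↥A = κ) →
      (∀ A ∈ ℱ, ∀ B ∈ ℱ, A ≠ B → #↥(A ∩ B) < ρ) →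
      ∃ T : Set α, ∀ A ∈ ℱ, 0 < #↥(A ∩ T) ∧ #↥(A ∩ T) < Order.succ (Order.succ ρ)) :
    ∀ i, (∀ A ∈ 𝒜, (A ∩ EHrec 𝒜 ρ r wf i).Nonempty ∧
        #↥(A ∩ EHrec 𝒜 ρ r wf i) ≤ Order.succ ρ) ∧
      ∀ x ∈ EHrec 𝒜 ρ r wf i, x ∉ EHP 𝒜 ρ r wf i := by
  have hlam0 : ℵ₀ ≤ lam := le_trans (le_trans hρ0 (Order.le_succ ρ)) hsl
  have hsρ0 : ℵ₀ ≤ Order.succ ρ := le_trans hρ0 (Order.le_succ ρ)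
  intro i
  refine wf.induction (C := fun i =>
      (∀ A ∈ 𝒜, (A ∩ EHrec 𝒜 ρ r wf i).Nonempty ∧
        #↥(A ∩ EHrec 𝒜 ρ r wf i) ≤ Order.succ ρ) ∧
      ∀ x ∈ EHrec 𝒜 ρ r wf i, x ∉ EHP 𝒜 ρ r wf i) i ?_
  clear i; intro i IH
  -- the part already chosen is small inside each `A`
  have hPsmall : ∀ A ∈ 𝒜, #↥(A ∩ EHP 𝒜 ρ r wf i) < κ := by
    intro A hA
    have hrepr : A ∩ EHP 𝒜 ρ r wf i = ⋃ j, A ∩ ⋃ _ : r j i, EHrec 𝒜 ρ r wf j := by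
      rw [EHP, inter_iUnion]
    have hbound : ∀ j, #↥(A ∩ ⋃ _ : r j i, EHrec 𝒜 ρ r wf j) ≤ Order.succ ρ := by
      intro j
      by_cases hj : r j i
      · have : (⋃ _ : r j i, EHrec 𝒜 ρ r wf j) = EHrec 𝒜 ρ r wf j := by
          simp [hj]
        rw [this]
        exact ((IH j hj).1 A hA).2
      · have : (⋃ _ : r j i, EHrec 𝒜 ρ r wf j) = (∅ : Set α) := by
          simp [hj]
        rw [this]
        simp
    calc #↥(A ∩ EHP 𝒜 ρ r wf i)
        ≤ #ι * ⨆ j, #↥(A ∩ ⋃ _ : r j i, EHrec 𝒜 ρ r wf j) := by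
          rw [hrepr]; exact mk_iUnion_le _
      _ ≤ lam * Order.succ ρ := by
          rw [hι]
          exact mul_le_mul_right (ciSup_le' hbound) lam
      _ = lam := by
          rw [mul_eq_max hlam0 hsρ0, max_eq_left hsl]
      _ < κ := hlκ
  -- hence each `A \ EHP i` still has full size `κ`
  have hsize' : ∀ A ∈ 𝒜, #↥(A \ EHP 𝒜 ρ r wf i : Set α) = κ := by
    intro A hA
    have hsub : A ∩ EHP 𝒜 ρ r wf i ⊆ A := inter_subset_left
    have hdiff : A \ (A ∩ EHP 𝒜 ρ r wf i) = A \ EHP 𝒜 ρ r wf i := diff_self_inter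
    have hadd := mk_diff_add_mk (S := A) (T := A ∩ EHP 𝒜 ρ r wf i) hsub
    rw [hdiff, hsize A hA] at hadd
    by_contra hne
    have hlt : #↥(A \ EHP 𝒜 ρ r wf i : Set α) < κ := by
      rcases lt_or_ge (#↥(A \ EHP 𝒜 ρ r wf i : Set α)) κ with h | h
      · exact h
      · exact absurd (le_antisymm (by
          calc #↥(A \ EHP 𝒜 ρ r wf i : Set α) ≤ #↥A := mk_le_mk_of_subset diff_subset
            _ = κ := hsize A hA) h) hne
    exact absurd hadd (ne_of_lt (add_lt_of_lt hκ hlt (hPsmall A hA)))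
  -- the family of shrunken sets is `ρ`-almost disjoint of size `κ`, apply `hEH`
  have hinj : InjOn (fun A => A \ EHP 𝒜 ρ r wf i) 𝒜 := by
    intro A hA A' hA' heq
    by_contra hne
    have hsub2 : A \ EHP 𝒜 ρ r wf i ⊆ A ∩ A' := by
      intro x hx
      have heq' : A \ EHP 𝒜 ρ r wf i = A' \ EHP 𝒜 ρ r wf i := heq
      have hx' : x ∈ A' \ EHP 𝒜 ρ r wf i := heq' ▸ hx
      exact ⟨hx.1, hx'.1⟩
    have : κ ≤ #↥(A ∩ A') := by
      rw [← hsize' A hA]; exact mk_le_mk_of_subset hsub2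
    exact absurd (lt_of_le_of_lt this (lt_trans (had A hA A' hA' hne) hρκ)) (lt_irrefl κ)
  have hex : ∃ T : Set α, ∀ A ∈ 𝒜,
      0 < #↥((A \ EHP 𝒜 ρ r wf i) ∩ T) ∧
        #↥((A \ EHP 𝒜 ρ r wf i) ∩ T) < Order.succ (Order.succ ρ) := by
    obtain ⟨T, hT⟩ := hEH ((fun A => A \ EHP 𝒜 ρ r wf i) '' 𝒜)
      (by rw [mk_image_eq_of_injOn _ _ hinj, hcard])
      (by rintro B ⟨A, hA, rfl⟩; exact hsize' A hA)
      (by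
        rintro B ⟨A, hA, rfl⟩ B' ⟨A', hA', rfl⟩ hne
        have hAA' : A ≠ A' := by rintro rfl; exact hne rfl
        have hsub3 : (A \ EHP 𝒜 ρ r wf i) ∩ (A' \ EHP 𝒜 ρ r wf i) ⊆ A ∩ A' :=
          fun x hx => ⟨hx.1.1, hx.2.1⟩
        exact lt_of_le_of_lt (mk_le_mk_of_subset hsub3) (had A hA A' hA' hAA'))
    exact ⟨T, fun A hA => hT _ (mem_image_of_mem _ hA)⟩
  rw [EHrec_def 𝒜 ρ r wf i, dif_pos hex]
  have hkey : ∀ A ∈ 𝒜,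
      A ∩ (⋃ A' ∈ 𝒜, (A' \ EHP 𝒜 ρ r wf i) ∩ hex.choose)
        = (A \ EHP 𝒜 ρ r wf i) ∩ hex.choose := by
    intro A hA
    ext x
    constructor
    · rintro ⟨hxA, hxU⟩
      simp only [mem_iUnion] at hxU
      obtain ⟨A', hA', hx'⟩ := hxU
      exact ⟨⟨hxA, hx'.1.2⟩, hx'.2⟩
    · intro hx
      refine ⟨hx.1.1, ?_⟩
      simp only [mem_iUnion]
      exact ⟨A, hA, hx⟩
  constructor
  · intro A hA
    rw [hkey A hA]
    obtain ⟨hpos, hlt⟩ := hex.choose_spec A hA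
    constructor
    · rw [← nonempty_coe_sort]
      exact mk_ne_zero_iff.mp (pos_iff_ne_zero.mp hpos)
    · exact Order.lt_succ_iff.mp hlt
  · intro x hx
    simp only [mem_iUnion] at hx
    obtain ⟨A', hA', hx'⟩ := hx
    exact hx'.1.2

/-- The union `X` of all stages meets every `A ∈ 𝒜` in a set of size exactly `lam`:
at most `lam` since there are `lam` stages each contributing at most `ρ⁺` points of `A`,
and at least `lam` since the stages are pairwise disjoint and each contributes a point. -/
private theorem EHrec_trace {α : Type u} {κ ρ lam : Cardinal.{u}}
    (hκ : ℵ₀ ≤ κ) (hρ0 : ℵ₀ ≤ ρ) (hρκ : ρ < κ)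
    (hsl : Order.succ ρ ≤ lam) (hlκ : lam < κ)
    {ι : Type u} (r : ι → ι → Prop) (wf : WellFounded r)
    (tri : ∀ i j : ι, i ≠ j → r i j ∨ r j i) (hι : #ι = lam)
    (𝒜 : Set (Set α)) (hcard : #↥𝒜 = κ) (hsize : ∀ A ∈ 𝒜, #↥A = κ)
    (had : ∀ A ∈ 𝒜, ∀ B ∈ 𝒜, A ≠ B → #↥(A ∩ B) < ρ)
    (hEH : ∀ ℱ : Set (Set α), #↥ℱ = κ → (∀ A ∈ ℱ, #↥A = κ) →
      (∀ A ∈ ℱ, ∀ B ∈ ℱ, A ≠ B → #↥(A ∩ B) < ρ) →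
      ∃ T : Set α, ∀ A ∈ ℱ, 0 < #↥(A ∩ T) ∧ #↥(A ∩ T) < Order.succ (Order.succ ρ)) :
    ∀ A ∈ 𝒜, #↥(A ∩ ⋃ i : ι, EHrec 𝒜 ρ r wf i) = lam := by
  have hlam0 : ℵ₀ ≤ lam := le_trans (le_trans hρ0 (Order.le_succ ρ)) hsl
  have hsρ0 : ℵ₀ ≤ Order.succ ρ := le_trans hρ0 (Order.le_succ ρ)
  have spec := EHrec_spec hκ hρ0 hρκ hsl hlκ r wf tri hι 𝒜 hcard hsize had hEH
  intro A hA
  refine le_antisymm ?_ ?_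
  · calc #↥(A ∩ ⋃ i : ι, EHrec 𝒜 ρ r wf i)
        ≤ #ι * ⨆ i : ι, #↥(A ∩ EHrec 𝒜 ρ r wf i) := by
          rw [inter_iUnion]; exact mk_iUnion_le _
      _ ≤ lam * Order.succ ρ := by
          rw [hι]
          exact mul_le_mul_right (ciSup_le' fun i => ((spec i).1 A hA).2) lam
      _ = lam := by rw [mul_eq_max hlam0 hsρ0, max_eq_left hsl]
  · have hdisj : ∀ i j : ι, i ≠ j →
        (A ∩ EHrec 𝒜 ρ r wf i) ∩ (A ∩ EHrec 𝒜 ρ r wf j) = ∅ := by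
      have key : ∀ i j : ι, r i j →
          (EHrec 𝒜 ρ r wf i) ∩ (EHrec 𝒜 ρ r wf j) = ∅ := by
        intro i j hij
        ext x
        simp only [mem_inter_iff, mem_empty_iff_false, iff_false, not_and]
        intro hxi hxj
        have hnot := (spec j).2 x hxj
        apply hnot
        rw [EHP]
        simp only [mem_iUnion]
        exact ⟨i, hij, hxi⟩
      intro i j hij
      have hk : (EHrec 𝒜 ρ r wf i) ∩ (EHrec 𝒜 ρ r wf j) = ∅ := by
        rcases tri i j hij with h | h
        · exact key i j h
        · rw [inter_comm]; exact key j i h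
      apply eq_empty_iff_forall_notMem.mpr
      intro x hx
      have hx' : x ∈ (EHrec 𝒜 ρ r wf i) ∩ (EHrec 𝒜 ρ r wf j) := ⟨hx.1.2, hx.2.2⟩
      rw [hk] at hx'
      exact hx'
    set g : ι → ↥(A ∩ ⋃ i : ι, EHrec 𝒜 ρ r wf i) := fun i =>
      ⟨((spec i).1 A hA).1.some, ((spec i).1 A hA).1.some_mem.1,
        mem_iUnion.mpr ⟨i, ((spec i).1 A hA).1.some_mem.2⟩⟩ with hg
    have hginj : Function.Injective g := by
      intro i j hij
      by_contra hne
      have hx : ((spec i).1 A hA).1.some = ((spec j).1 A hA).1.some :=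
        congrArg Subtype.val hij
      have hmem : ((spec i).1 A hA).1.some ∈
          (A ∩ EHrec 𝒜 ρ r wf i) ∩ (A ∩ EHrec 𝒜 ρ r wf j) := by
        refine ⟨((spec i).1 A hA).1.some_mem, ?_⟩
        rw [hx]; exact ((spec j).1 A hA).1.some_mem
      rw [hdisj i j hne] at hmem
      exact hmem
    calc lam = #ι := hι.symm
      _ ≤ #↥(A ∩ ⋃ i : ι, EHrec 𝒜 ρ r wf i) := mk_le_of_injective hginj

/-- (GCH) if M(κ,κ,ρ) ↛ B(ρ⁺) then M(κ,λ,ρ) ↛ B(ρ⁺) for all ρ⁺ < λ < κ.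
The Erdős–Hajnal theorem M(κ,λ,ρ) → B(ρ⁺⁺) is taken as the hypothesis `hEH`. -/
theorem stmt16 {α : Type u} (κ ρ : Cardinal.{u})
    (hGCH : ∀ c : Cardinal.{u}, ℵ₀ ≤ c → 2 ^ c = Order.succ c)
    (hκ : κ.IsRegular) (hρ : ρ.IsRegular) (hα : #α = κ)
    (h1 : ∃ 𝒜 : Set (Set α), #↥𝒜 = κ ∧ (∀ A ∈ 𝒜, #↥A = κ) ∧
      (∀ A ∈ 𝒜, ∀ B ∈ 𝒜, A ≠ B → #↥(A ∩ B) < ρ) ∧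
      ¬ ∃ T : Set α, ∀ A ∈ 𝒜, 0 < #↥(A ∩ T) ∧ #↥(A ∩ T) < Order.succ ρ)
    (hEH : ∀ lam : Cardinal.{u}, ∀ ℱ : Set (Set α), #↥ℱ = κ → (∀ A ∈ ℱ, #↥A = lam) →
      (∀ A ∈ ℱ, ∀ B ∈ ℱ, A ≠ B → #↥(A ∩ B) < ρ) →
      ∃ T : Set α, ∀ A ∈ ℱ, 0 < #↥(A ∩ T) ∧ #↥(A ∩ T) < Order.succ (Order.succ ρ)) :
    ∀ lam : Cardinal.{u}, Order.succ ρ < lam → lam < κ →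
      ∃ ℬ : Set (Set α), #↥ℬ = κ ∧ (∀ B ∈ ℬ, #↥B = lam) ∧
        (∀ B ∈ ℬ, ∀ B' ∈ ℬ, B ≠ B' → #↥(B ∩ B') < ρ) ∧
        ¬ ∃ T : Set α, ∀ B ∈ ℬ, 0 < #↥(B ∩ T) ∧ #↥(B ∩ T) < Order.succ ρ := by
  intro lam hsl hlκ
  obtain ⟨𝒜, hcard, hsizeA, had, hpath⟩ := h1
  have hρlam : ρ < lam := lt_trans (Order.lt_succ ρ) hsl
  have hρκ : ρ < κ := lt_trans hρlam hlκ
  -- index the recursion by a well-order of cardinality `lam`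
  set ι : Type u := lam.out with hιdef
  set r : ι → ι → Prop := WellOrderingRel with hrdef
  have wf : WellFounded r := (WellOrderingRel.isWellOrder).toIsWellFounded.wf
  have tri : ∀ i j : ι, i ≠ j → r i j ∨ r j i := by
    intro i j hne
    rcases trichotomous_of r i j with h | h | h
    · exact Or.inl h
    · exact absurd h hne
    · exact Or.inr h
  have hι : #ι = lam := mk_out lam
  set X : Set α := ⋃ i : ι, EHrec 𝒜 ρ r wf i with hXdef
  have hX : ∀ A ∈ 𝒜, #↥(A ∩ X) = lam :=
    EHrec_trace hκ.aleph0_le hρ.aleph0_le hρκ (le_of_lt hsl) hlκ r wf tri hι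
      𝒜 hcard hsizeA had (hEH κ)
  -- the desired family
  refine ⟨(fun A => A ∩ X) '' 𝒜, ?_, ?_, ?_, ?_⟩
  · have hinj : InjOn (fun A => A ∩ X) 𝒜 := by
      intro A hA A' hA' heq
      by_contra hne
      have heq' : A ∩ X = A' ∩ X := heq
      have hsub : A ∩ X ⊆ A ∩ A' := by
        intro x hx
        have hx' : x ∈ A' ∩ X := by rw [← heq']; exact hx
        exact ⟨hx.1, hx'.1⟩
      have : lam ≤ #↥(A ∩ A') := by
        rw [← hX A hA]; exact mk_le_mk_of_subset hsub
      exact absurd (lt_of_le_of_lt this (lt_trans (had A hA A' hA' hne) hρlam))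
        (lt_irrefl lam)
    rw [mk_image_eq_of_injOn _ _ hinj, hcard]
  · rintro B ⟨A, hA, rfl⟩
    exact hX A hA
  · rintro B ⟨A, hA, rfl⟩ B' ⟨A', hA', rfl⟩ hne
    have hAA' : A ≠ A' := by rintro rfl; exact hne rfl
    have hsub : (A ∩ X) ∩ (A' ∩ X) ⊆ A ∩ A' := fun x hx => ⟨hx.1.1, hx.2.1⟩
    exact lt_of_le_of_lt (mk_le_mk_of_subset hsub) (had A hA A' hA' hAA')
  · rintro ⟨T, hT⟩
    apply hpath
    refine ⟨X ∩ T, fun A hA => ?_⟩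
    have h := hT (A ∩ X) (mem_image_of_mem _ hA)
    rwa [inter_assoc] at h
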